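/- Let q be a real number with 0 < q < 1 and let x, y be complex numbers with |x| < 1/(1−q) and |y| < 1/(1−q). Then the series ∑_{n=0}^{∞} (x ⊕_q y)^n/[n]_q! converges and its sum equals e_q(x)·e_q(y); that is, e_q(x)·e_q(y) = e_q(x ⊕_q y). -/

import Mathlib

open Filter Topology

/-- The `q`-basic number `[n]_q = (1 - q^n)/(1 - q)`. -/
noncomputable def qNum (q : ℝ) (n : ℕ) : ℝ := (1 - q ^ n) / (1 - q)

/-- The `q`-factorial `[n]_q! = [1]_q [2]_q ⋯ [n]_q`, with `[0]_q! = 1`. -/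
noncomputable def qFact (q : ℝ) (n : ℕ) : ℝ := ∏ j ∈ Finset.range n, qNum q (j + 1)

/-- The Gaussian binomial coefficient `[n]_q! / ([k]_q! [n-k]_q!)`. -/
noncomputable def qBinom (q : ℝ) (n k : ℕ) : ℝ := qFact q n / (qFact q k * qFact q (n - k))

/-- The `q`-exponential `e_q(z) = ∑ z^n / [n]_q!`. -/
noncomputable def qExp (q : ℝ) (z : ℂ) : ℂ := ∑' n : ℕ, z ^ n / (qFact q n : ℂ)

/-- The `q`-sine `sin_q(z) = ∑ (-1)^n z^(2n+1) / [2n+1]_q!`. -/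
noncomputable def qSin (q : ℝ) (z : ℂ) : ℂ :=
  ∑' n : ℕ, (-1 : ℂ) ^ n * z ^ (2 * n + 1) / (qFact q (2 * n + 1) : ℂ)

/-- The `q`-cosine `cos_q(z) = ∑ (-1)^n z^(2n) / [2n]_q!`. -/
noncomputable def qCos (q : ℝ) (z : ℂ) : ℂ :=
  ∑' n : ℕ, (-1 : ℂ) ^ n * z ^ (2 * n) / (qFact q (2 * n) : ℂ)

/-- The `q`-addition power `(x ⊕_q y)^n = ∑_{k=0}^n binom_q(n,k) x^k y^(n-k)`. -/
noncomputable def qAddPow (q : ℝ) (x y : ℂ) (n : ℕ) : ℂ :=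
  ∑ k ∈ Finset.range (n + 1), (qBinom q n k : ℂ) * x ^ k * y ^ (n - k)

/-- The `q`-subtraction power `(x ⊖_q y)^n = ∑_{k=0}^n binom_q(n,k) (-1)^(n-k) x^k y^(n-k)`. -/
noncomputable def qSubPow (q : ℝ) (x y : ℂ) (n : ℕ) : ℂ :=
  ∑ k ∈ Finset.range (n + 1), (qBinom q n k : ℂ) * (-1 : ℂ) ^ (n - k) * x ^ k * y ^ (n - k)

/-- The `q`-tangent `tan_q(z) = sin_q(z)/cos_q(z)`. -/
noncomputable def qTan (q : ℝ) (z : ℂ) : ℂ := qSin q z / qCos q z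

/-- The second `q`-exponential `E_q(z) = ∑ q^(n(n-1)/2) z^n / [n]_q!`. -/
noncomputable def qExpE (q : ℝ) (z : ℂ) : ℂ :=
  ∑' n : ℕ, (q : ℂ) ^ (n * (n - 1) / 2) * z ^ n / (qFact q n : ℂ)

lemma qFact_pos {q : ℝ} (hq0 : 0 < q) (hq1 : q < 1) (n : ℕ) : 0 < qFact q n := by
  refine Finset.prod_pos fun j _ => ?_
  unfold qNum
  have h1 : q ^ (j + 1) < 1 := pow_lt_one₀ hq0.le hq1 (Nat.succ_ne_zero j)
  exact div_pos (by linarith) (by linarith)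

lemma qExp_summable_norm {q : ℝ} (hq0 : 0 < q) (hq1 : q < 1) {z : ℂ}
    (hz : ‖z‖ < 1 / (1 - q)) :
    Summable fun n : ℕ => ‖z ^ n / (qFact q n : ℂ)‖ := by
  have h1q : (0:ℝ) < 1 - q := by linarith
  rcases eq_or_ne z 0 with rfl | hz0
  · apply summable_of_ne_finset_zero (s := {0})
    intro n hn
    simp only [Finset.mem_singleton] at hn
    simp [zero_pow hn]
  · have hne : ∀ n : ℕ, z ^ n / (qFact q n : ℂ) ≠ 0 := by
      intro n
      exact div_ne_zero (pow_ne_zero _ hz0) (by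
        exact_mod_cast (qFact_pos hq0 hq1 n).ne')
    refine (summable_of_ratio_test_tendsto_lt_one
      (l := ‖z‖ * (1 - q)) ?_ (Eventually.of_forall hne) ?_).norm
    · rw [← lt_div_iff₀ h1q]
      simpa using hz
    · have hratio : ∀ n : ℕ,
          ‖z ^ (n + 1) / (qFact q (n + 1) : ℂ)‖ / ‖z ^ n / (qFact q n : ℂ)‖
            = ‖z‖ * ((1 - q) / (1 - q ^ (n + 1))) := by
        intro n
        have hfn := qFact_pos hq0 hq1 n
        have hqn : q ^ (n + 1) < 1 := pow_lt_one₀ hq0.le hq1 (Nat.succ_ne_zero n)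
        have hnum : (0:ℝ) < 1 - q ^ (n + 1) := by linarith
        have hfs : qFact q (n + 1) = qFact q n * ((1 - q ^ (n + 1)) / (1 - q)) := by
          rw [qFact, Finset.prod_range_succ]; rfl
        have habs : ∀ m : ℕ, ‖z ^ m / (qFact q m : ℂ)‖
            = ‖z‖ ^ m / qFact q m := by
          intro m
          rw [norm_div, norm_pow, Complex.norm_real,
            Real.norm_eq_abs, abs_of_pos (qFact_pos hq0 hq1 m)]
        rw [habs, habs, hfs, pow_succ]
        have hz0' : (0:ℝ) < ‖z‖ := norm_pos_iff.mpr hz0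
        have hz0n : (0:ℝ) < ‖z‖ ^ n := pow_pos hz0' n
        field_simp
      simp only [hratio]
      have h1 : Tendsto (fun n : ℕ => q ^ (n + 1)) atTop (𝓝 0) := by
        have := tendsto_pow_atTop_nhds_zero_of_lt_one hq0.le hq1
        exact this.comp (tendsto_add_atTop_nat 1)
      have h2 : Tendsto (fun n : ℕ => (1 - q) / (1 - q ^ (n + 1))) atTop
          (𝓝 ((1 - q) / (1 - 0))) :=
        tendsto_const_nhds.div (tendsto_const_nhds.sub h1) (by norm_num)
      simpa using tendsto_const_nhds.mul h2

/-- `e_q(x) e_q(y) = e_q(x ⊕_q y)`: the series `∑ (x ⊕_q y)^n/[n]_q!` converges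
to `e_q(x) e_q(y)`. -/
theorem qExp_qAdd (q : ℝ) (hq0 : 0 < q) (hq1 : q < 1) (x y : ℂ)
    (hx : ‖x‖ < 1 / (1 - q)) (hy : ‖y‖ < 1 / (1 - q)) :
    HasSum (fun n : ℕ => qAddPow q x y n / (qFact q n : ℂ)) (qExp q x * qExp q y) := by
  have hf := qExp_summable_norm hq0 hq1 hx
  have hg := qExp_summable_norm hq0 hq1 hy
  have key := hasSum_sum_range_mul_of_summable_norm hf hg
  have heq : (fun n : ℕ => qAddPow q x y n / (qFact q n : ℂ))
      = fun n : ℕ => ∑ k ∈ Finset.range (n + 1),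
        (x ^ k / (qFact q k : ℂ)) * (y ^ (n - k) / (qFact q (n - k) : ℂ)) := by
    funext n
    rw [qAddPow, Finset.sum_div]
    refine Finset.sum_congr rfl fun k hk => ?_
    have hkn : k ≤ n := Nat.lt_succ_iff.mp (Finset.mem_range.mp hk)
    have h1 : (qFact q n : ℂ) ≠ 0 := by exact_mod_cast (qFact_pos hq0 hq1 n).ne'
    have h2 : (qFact q k : ℂ) ≠ 0 := by exact_mod_cast (qFact_pos hq0 hq1 k).ne'
    have h3 : (qFact q (n - k) : ℂ) ≠ 0 := by
      exact_mod_cast (qFact_pos hq0 hq1 (n - k)).ne'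
    rw [qBinom]
    push_cast
    field_simp
  rw [heq, qExp, qExp]
  exact key
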